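/- As formal power series in $z$ and $w$ (or for $|z|,|w|<1$), $\frac{(1-z)^{\nu}(1-w)^{-\nu}}{z-w}=\frac{1}{z-w}+\sum_{a,b\ge 0}\frac{(-\nu)_{a+1}(\nu)_{b+1}}{(a+b+1)\,\nu\, a!\, b!}\, z^a w^b$ for any complex $\nu \ne 0$. -/
import Mathlib


/-- Pochhammer (rising factorial) symbol. -/
noncomputable def poch (ν : ℂ) (m : ℕ) : ℂ := (ascPochhammer ℂ m).eval ν

/-- Coefficient `c_{a,b} = (-ν)_{a+1}(ν)_{b+1} / ((a+b+1) ν a! b!)` of the double series. -/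
noncomputable def seriesCoeff (ν : ℂ) (a b : ℕ) : ℂ :=
  poch (-ν) (a + 1) * poch ν (b + 1) /
    (((a : ℂ) + b + 1) * ν * (Nat.factorial a : ℂ) * (Nat.factorial b : ℂ))

lemma poch_zero (ν : ℂ) : poch ν 0 = 1 := by simp [poch]

lemma poch_succ (ν : ℂ) (m : ℕ) : poch ν (m + 1) = poch ν m * (ν + m) := by
  simp [poch, ascPochhammer_succ_right]

lemma fac_ne_zero (n : ℕ) : (Nat.factorial n : ℂ) ≠ 0 :=
  Nat.cast_ne_zero.mpr (Nat.factorial_ne_zero n)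

/-- The identity `(1-z)^ν (1-w)^{-ν} - 1 = (z-w) ∑_{a,b≥0} c_{a,b} z^a w^b` as formal
power series in two variables, stated coefficientwise: the coefficient of `z^a w^b` on the
left is `(-ν)_a/a! ⋅ (ν)_b/b!` minus `1` at `(a,b)=(0,0)`, and on the right it is
`c_{a-1,b} - c_{a,b-1}` (terms present only when the index is nonnegative). -/
theorem binomial_double_series_identity (ν : ℂ) (hν : ν ≠ 0) (a b : ℕ) :
    poch (-ν) a / (Nat.factorial a : ℂ) * (poch ν b / (Nat.factorial b : ℂ))
        - (if a = 0 ∧ b = 0 then 1 else 0)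
      = (if 1 ≤ a then seriesCoeff ν (a - 1) b else 0)
        - (if 1 ≤ b then seriesCoeff ν a (b - 1) else 0) := by
  match a, b with
  | 0, 0 => simp [poch_zero]
  | a + 1, 0 =>
      have ha : ((a : ℂ) + 1) ≠ 0 := by
        have h : ((a + 1 : ℕ) : ℂ) ≠ 0 := Nat.cast_ne_zero.mpr (by omega)
        push_cast at h ⊢; simpa using h
      simp only [Nat.add_sub_cancel, seriesCoeff]
      rw [if_pos (Nat.succ_le_succ (Nat.zero_le a)), if_neg (by norm_num),
        if_neg (by norm_num)]
      rw [sub_zero, sub_zero, Nat.factorial_zero, poch_zero, Nat.cast_one, div_one, mul_one,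
        div_eq_div_iff (fac_ne_zero _) (by simp [ha, hν, fac_ne_zero, Nat.factorial_ne_zero])]
      simp only [Nat.factorial_succ, poch_succ, poch_zero]
      push_cast
      ring
  | 0, b + 1 =>
      have hb : ((b : ℂ) + 1) ≠ 0 := by
        have h : ((b + 1 : ℕ) : ℂ) ≠ 0 := Nat.cast_ne_zero.mpr (by omega)
        push_cast at h ⊢; simpa using h
      simp only [Nat.add_sub_cancel, seriesCoeff]
      rw [if_neg (by norm_num), if_pos (Nat.succ_le_succ (Nat.zero_le b)),
        if_neg (by norm_num)]
      rw [sub_zero, zero_sub, Nat.factorial_zero, poch_zero, Nat.cast_zero,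
        ← neg_div, Nat.cast_one, div_one, one_mul,
        div_eq_div_iff (fac_ne_zero _) (by simp [hb, hν, fac_ne_zero, Nat.factorial_ne_zero])]
      simp only [Nat.factorial_succ, poch_succ, poch_zero]
      push_cast
      ring
  | a + 1, b + 1 =>
      have hab : ((a : ℂ) + b + 2) ≠ 0 := by
        have h : ((a + b + 2 : ℕ) : ℂ) ≠ 0 := Nat.cast_ne_zero.mpr (by omega)
        push_cast at h; exact h
      have h1 : ((a : ℂ) + (↑(b+1):ℂ) + 1) = (a:ℂ) + b + 2 := by push_cast; ring
      have h2 : ((↑(a+1):ℂ) + b + 1) = (a:ℂ) + b + 2 := by push_cast; ring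
      simp only [Nat.add_sub_cancel, seriesCoeff, h1, h2]
      rw [if_pos (Nat.succ_le_succ (Nat.zero_le a)),
        if_pos (Nat.succ_le_succ (Nat.zero_le b)), if_neg (by norm_num), sub_zero]
      rw [div_mul_div_comm,
        div_sub_div _ _ (by simp [hab, hν, Nat.factorial_ne_zero]) (by simp [hab, hν, Nat.factorial_ne_zero]),
        div_eq_div_iff (by simp [Nat.factorial_ne_zero]) (by simp [hab, hν, Nat.factorial_ne_zero])]
      simp only [Nat.factorial_succ, poch_succ]
      push_cast
      ring
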